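/- Let μ ∈ M_1(Δ), and for each k large enough that μ(Δ ∩ K_k) > 0, where K_k = {x ∈ ℂ : |Re x| ≤ k and |Im x| ≤ k}, let μ_k be the normalized restriction of μ to Δ ∩ K_k. Then μ_k converges weakly to μ as k → ∞, and lim_{k→∞} I_V(μ_k) = I_V(μ). -/

import Mathlib

open MeasureTheory Filter Topology
open scoped ENNReal NNReal

/-- `⊤`-aware positive part of an extended real, as a value in `ℝ≥0∞`. -/
noncomputable def EReal.posPart' (x : EReal) : ℝ≥0∞ :=
  if x = ⊤ then ⊤ else ENNReal.ofReal x.toReal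

/-- Integral of an `EReal`-valued function: positive part minus negative part. -/
noncomputable def eIntegral {α : Type*} [MeasurableSpace α] (μ : Measure α) (f : α → EReal) :
    EReal :=
  ((∫⁻ x, (f x).posPart' ∂μ : ℝ≥0∞) : EReal) - ((∫⁻ x, (-(f x)).posPart' ∂μ : ℝ≥0∞) : EReal)

/-- `log (1/r)` as an extended real, equal to `+∞` at `r = 0`. -/
noncomputable def negLog (r : ℝ) : EReal :=
  if r = 0 then ⊤ else ((- Real.log r : ℝ) : EReal)

/-- The weighted logarithmic kernel `F_W(x,y) = (β/2) log(1/|x-y|) + W(x)/2 + W(y)/2`. -/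
noncomputable def kern {α : Type*} [PseudoMetricSpace α] (β : ℝ) (W : α → EReal) (x y : α) :
    EReal :=
  ((β / 2 : ℝ) : EReal) * negLog (dist x y) + ((2⁻¹ : ℝ) : EReal) * W x
    + ((2⁻¹ : ℝ) : EReal) * W y

/-- The weighted logarithmic energy `I_W(μ) = ∬ F_W(x,y) dμ(x) dμ(y)`. -/
noncomputable def energy {α : Type*} [MeasurableSpace α] [PseudoMetricSpace α] (β : ℝ)
    (W : α → EReal) (μ : Measure α) : EReal :=
  eIntegral (μ.prod μ) (fun p => kern β W p.1 p.2)

/-- The set of (Borel) probability measures carried by the closed set `Δ`,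
i.e. `M_1(Δ)` viewed inside the probability measures on the ambient space. -/
def M1 {α : Type*} [MeasurableSpace α] [TopologicalSpace α]
    (Δ : Set α) : Set (ProbabilityMeasure α) :=
  {μ | (μ : Measure α) Δᶜ = 0}

/-- The filter `|x| → ∞, x ∈ Δ`. -/
noncomputable def atComplexInftyWithin (Δ : Set ℂ) : Filter ℂ :=
  (Filter.comap (fun x : ℂ => ‖x‖) Filter.atTop) ⊓ Filter.principal Δ

/-- The weak growth assumption : `liminf_{|x| → ∞, x ∈ Δ} (V(x) - β' log |x|) > -∞`
for some `β' > 1` with `β' ≥ β`. -/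
def WeakGrowth (β : ℝ) (Δ : Set ℂ) (V : ℂ → ℝ) : Prop :=
  ∃ β' : ℝ, 1 < β' ∧ β ≤ β' ∧
    (⊥ : EReal) <
      Filter.liminf (fun x : ℂ => ((V x - β' * Real.log (‖x‖) : ℝ) : EReal))
        (atComplexInftyWithin Δ)

/-- The square `K_k = {x : |Re x| ≤ k, |Im x| ≤ k}`. -/
def Ksq (k : ℕ) : Set ℂ := {x : ℂ | |x.re| ≤ (k : ℝ) ∧ |x.im| ≤ (k : ℝ)}

lemma posPart'_coe (r : ℝ) : EReal.posPart' (r : EReal) = ENNReal.ofReal r := by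
  simp [EReal.posPart']
lemma posPart'_top : EReal.posPart' ⊤ = ⊤ := by simp [EReal.posPart']
lemma posPart'_bot : EReal.posPart' ⊥ = 0 := by simp [EReal.posPart']
lemma measurable_posPart' : Measurable EReal.posPart' := by
  unfold EReal.posPart'
  apply Measurable.ite (MeasurableSet.singleton ⊤) measurable_const
  exact ENNReal.measurable_ofReal.comp measurable_ereal_toReal
lemma posPart'_neg_le {a : EReal} {C : ℝ} (hC : 0 ≤ C) (ha : ((-C : ℝ) : EReal) ≤ a) :
    (-a).posPart' ≤ ENNReal.ofReal C := by
  induction a using EReal.rec with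
  | bot => exact absurd ha (by simp [← EReal.coe_neg])
  | top => simp [EReal.neg_top, posPart'_bot]
  | coe r =>
      rw [← EReal.coe_neg, posPart'_coe]
      apply ENNReal.ofReal_le_ofReal
      rw [EReal.coe_le_coe_iff] at ha
      linarith
lemma posPart'_add_const {a : EReal} {C : ℝ} (hC : 0 ≤ C) (ha : ((-C : ℝ) : EReal) ≤ a) :
    (a + (C : EReal)).posPart' = a.posPart' + (ENNReal.ofReal C - (-a).posPart') := by
  induction a using EReal.rec with
  | bot => exact absurd ha (by simp [← EReal.coe_neg])
  | top => simp [EReal.top_add_coe, posPart'_top]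
  | coe r =>
      rw [EReal.coe_le_coe_iff] at ha
      rw [← EReal.coe_add, posPart'_coe, posPart'_coe, ← EReal.coe_neg, posPart'_coe]
      rcases le_or_gt 0 r with hr | hr
      · rw [ENNReal.ofReal_eq_zero.mpr (by linarith : -r ≤ 0), tsub_zero,
          ENNReal.ofReal_add hr hC]
      · rw [ENNReal.ofReal_eq_zero.mpr (le_of_lt hr), zero_add,
          ← ENNReal.ofReal_sub _ (by linarith)]
        ring_nf
lemma eIntegral_congr_ae {α : Type*} [MeasurableSpace α] {μ : Measure α} {f g : α → EReal}
    (h : f =ᵐ[μ] g) : eIntegral μ f = eIntegral μ g := by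
  unfold eIntegral
  have h1 : (fun x => (f x).posPart') =ᵐ[μ] fun x => (g x).posPart' :=
    h.mono fun x hx => by simp only [hx]
  have h2 : (fun x => (-f x).posPart') =ᵐ[μ] fun x => (-g x).posPart' :=
    h.mono fun x hx => by simp only [hx]
  rw [lintegral_congr_ae h1, lintegral_congr_ae h2]
lemma ennreal_sub_helper (P N : ℝ≥0∞) (C : ℝ) (hC : 0 ≤ C) (hN : N ≤ ENNReal.ofReal C) :
    ((P + (ENNReal.ofReal C - N) : ℝ≥0∞) : EReal) - (C : EReal) = (P : EReal) - (N : EReal) := by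
  have hNt : N ≠ ⊤ := (lt_of_le_of_lt hN ENNReal.ofReal_lt_top).ne
  lift N to ℝ≥0 using hNt
  have hNC : (N : ℝ) ≤ C := by
    rw [← ENNReal.ofReal_coe_nnreal] at hN
    exact (ENNReal.ofReal_le_ofReal_iff hC).mp hN
  have h1 : (ENNReal.ofReal C - (N : ℝ≥0∞)) = ENNReal.ofReal (C - (N : ℝ)) := by
    rw [ENNReal.ofReal_sub _ N.coe_nonneg, ENNReal.ofReal_coe_nnreal]
  rcases eq_or_ne P ⊤ with hP | hP
  · subst hP
    rw [top_add]
    simp only [EReal.coe_ennreal_top, EReal.top_sub_coe, EReal.coe_nnreal_eq_coe_real]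
  · lift P to ℝ≥0 using hP
    rw [h1, ← ENNReal.ofReal_coe_nnreal (p := P), ← ENNReal.ofReal_add P.coe_nonneg (by linarith),
      EReal.coe_ennreal_ofReal, max_eq_left (by nlinarith [P.coe_nonneg]), EReal.coe_nnreal_eq_coe_real,
      ENNReal.ofReal_coe_nnreal, EReal.coe_nnreal_eq_coe_real, ← EReal.coe_sub, ← EReal.coe_sub]
    norm_cast
    ring
lemma eIntegral_eq {α : Type*} [MeasurableSpace α] (ν : Measure α) [IsProbabilityMeasure ν]
    {f : α → EReal} (hf : Measurable f) {C : ℝ} (hC : 0 ≤ C)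
    (hbd : ∀ᵐ x ∂ν, ((-C : ℝ) : EReal) ≤ f x) :
    eIntegral ν f =
      ((∫⁻ x, (f x + (C : EReal)).posPart' ∂ν : ℝ≥0∞) : EReal) - (C : EReal) := by
  have hfp : Measurable fun x => (f x).posPart' := measurable_posPart'.comp hf
  have hfn : Measurable fun x => (-(f x)).posPart' :=
    measurable_posPart'.comp (continuous_neg.measurable.comp hf)
  set P := ∫⁻ x, (f x).posPart' ∂ν with hP
  set N := ∫⁻ x, (-(f x)).posPart' ∂ν with hN
  have hle : (fun x => (-(f x)).posPart') ≤ᵐ[ν] fun _ => ENNReal.ofReal C :=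
    hbd.mono fun x hx => posPart'_neg_le hC hx
  have hNle : N ≤ ENNReal.ofReal C := by
    calc N ≤ ∫⁻ _, ENNReal.ofReal C ∂ν := lintegral_mono_ae hle
    _ = ENNReal.ofReal C := by simp
  have hQ : ∫⁻ x, (f x + (C : EReal)).posPart' ∂ν = P + (ENNReal.ofReal C - N) := by
    rw [lintegral_congr_ae (hbd.mono fun x hx => posPart'_add_const hC hx)]
    rw [lintegral_add_left hfp]
    congr 1
    rw [lintegral_sub hfn (lt_of_le_of_lt hNle ENNReal.ofReal_lt_top).ne hle]
    simp [hN]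
  rw [hQ, ennreal_sub_helper P N C hC hNle]
  rfl
lemma lintegral_tendsto_of_monotone_sets {α : Type*} [MeasurableSpace α] (μ : Measure α)
    {g : α → ℝ≥0∞} (hg : Measurable g) {A : ℕ → Set α} (hA : Monotone A)
    (hm : ∀ k, MeasurableSet (A k)) (hcover : μ (⋃ k, A k)ᶜ = 0) :
    Tendsto (fun k => ∫⁻ x in A k, g x ∂μ) atTop (𝓝 (∫⁻ x, g x ∂μ)) := by
  have hmono : Monotone fun k => (A k).indicator g := fun i j hij x =>
    Set.indicator_le_indicator_of_subset (hA hij) (fun _ => zero_le) x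
  have h1 : ∀ k, ∫⁻ x in A k, g x ∂μ = ∫⁻ x, (A k).indicator g x ∂μ := fun k =>
    (lintegral_indicator (hm k) g).symm
  have h2 : Tendsto (fun k => ∫⁻ x, (A k).indicator g x ∂μ) atTop
      (𝓝 (⨆ k, ∫⁻ x, (A k).indicator g x ∂μ)) :=
    tendsto_atTop_iSup fun i j hij => lintegral_mono (hmono hij)
  have h3 : (⨆ k, ∫⁻ x, (A k).indicator g x ∂μ) = ∫⁻ x, g x ∂μ := by
    rw [← lintegral_iSup (fun k => hg.indicator (hm k)) hmono]
    apply lintegral_congr_ae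
    have hae : ∀ᵐ x ∂μ, x ∈ ⋃ k, A k := by
      rw [ae_iff]
      apply measure_mono_null _ hcover
      intro x hx
      simpa using hx
    filter_upwards [hae] with x hx
    obtain ⟨s, ⟨k, rfl⟩, hk⟩ := hx
    apply le_antisymm
    · exact iSup_le fun j => Set.indicator_le_self _ _ x
    · exact le_iSup_of_le k (le_of_eq (Set.indicator_of_mem hk g).symm)
  simp only [h1]
  rw [← h3]
  exact h2
lemma ae_prod_of_ae {α : Type*} [MeasurableSpace α] {ν : Measure α} [SFinite ν] {p : α → Prop}
    (h : ∀ᵐ x ∂ν, p x) : ∀ᵐ q ∂ν.prod ν, p q.1 ∧ p q.2 := by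
  rw [ae_iff] at h ⊢
  obtain ⟨T, hsub, hTm, hT0⟩ := exists_measurable_superset_of_null h
  apply measure_mono_null
    (t := (T ×ˢ (Set.univ : Set α)) ∪ ((Set.univ : Set α) ×ˢ T))
  · intro q hq
    simp only [Set.mem_setOf_eq, not_and_or] at hq
    rcases hq with hq | hq
    · exact Or.inl ⟨hsub hq, Set.mem_univ _⟩
    · exact Or.inr ⟨Set.mem_univ _, hsub hq⟩
  · apply measure_union_null <;> rw [Measure.prod_prod] <;> simp [hT0]
lemma kern_eq (β : ℝ) (hβ : 0 < β) (W : ℂ → ℝ) (x y : ℂ) :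
    kern β (fun z => ((W z : ℝ) : EReal)) x y =
      if dist x y = 0 then (⊤ : EReal)
      else (((β / 2) * (-Real.log (dist x y)) + 2⁻¹ * W x + 2⁻¹ * W y : ℝ) : EReal) := by
  unfold kern negLog
  rcases eq_or_ne (dist x y) 0 with h | h
  · rw [if_pos h, if_pos h]
    rw [EReal.coe_mul_top_of_pos (by positivity : (0:ℝ) < β / 2)]
    rw [← EReal.coe_mul, ← EReal.coe_mul, EReal.top_add_coe, EReal.top_add_coe]
  · rw [if_neg h, if_neg h]
    rw [← EReal.coe_mul, ← EReal.coe_mul, ← EReal.coe_mul, ← EReal.coe_add, ← EReal.coe_add]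
lemma kern_lower (β : ℝ) (hβ : 0 < β) {Δ : Set ℂ} (V : ℂ → ℝ) {C : ℝ}
    (hC : ∀ x ∈ Δ, β * Real.log (1 + ‖x‖) - V x ≤ C) {x y : ℂ}
    (hx : x ∈ Δ) (hy : y ∈ Δ) :
    ((-C : ℝ) : EReal) ≤ kern β (fun z => ((V z : ℝ) : EReal)) x y := by
  rw [kern_eq β hβ V x y]
  split_ifs with h
  · exact le_top
  · rw [EReal.coe_le_coe_iff]
    have hd : 0 < dist x y := lt_of_le_of_ne dist_nonneg (Ne.symm h)
    have hax : (0:ℝ) ≤ ‖x‖ := norm_nonneg _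
    have hay : (0:ℝ) ≤ ‖y‖ := norm_nonneg _
    have h1 : dist x y ≤ (1 + ‖x‖) * (1 + ‖y‖) := by
      have h2 : dist x y ≤ ‖x‖ + ‖y‖ := dist_le_norm_add_norm x y
      nlinarith
    have hlog : Real.log (dist x y) ≤
        Real.log (1 + ‖x‖) + Real.log (1 + ‖y‖) := by
      calc Real.log (dist x y) ≤ Real.log ((1 + ‖x‖) * (1 + ‖y‖)) :=
            Real.log_le_log hd h1
        _ = _ := Real.log_mul (by positivity) (by positivity)
    have h3 := hC x hx
    have h4 := hC y hy
    nlinarith [hlog]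
lemma growth_bound (β : ℝ) (hβ : 0 < β) {Δ : Set ℂ} (hΔc : IsClosed Δ)
    {V : ℂ → ℝ} (hV : ContinuousOn V Δ) (hgrowth : WeakGrowth β Δ V) :
    ∃ C : ℝ, 0 ≤ C ∧ ∀ x ∈ Δ, β * Real.log (1 + ‖x‖) - V x ≤ C := by
  obtain ⟨β', hβ'1, hββ', hlim⟩ := hgrowth
  obtain ⟨c, hc1, hc2⟩ := exists_between hlim
  have hcT : c < ⊤ := lt_of_lt_of_le hc2 le_top
  set m := c.toReal with hm
  have hcm : (m : EReal) = c := EReal.coe_toReal hcT.ne (ne_of_gt hc1)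
  have hev : ∀ᶠ x in atComplexInftyWithin Δ,
      (m : EReal) < ((V x - β' * Real.log (‖x‖) : ℝ) : EReal) := by
    rw [hcm]
    exact Filter.eventually_lt_of_lt_liminf hc2
  rw [atComplexInftyWithin, Filter.eventually_inf_principal, Filter.eventually_comap] at hev
  rw [Filter.eventually_atTop] at hev
  obtain ⟨b₀, hb₀⟩ := hev
  set b₁ := max b₀ 2 with hb₁
  have key : ∀ x ∈ Δ, b₁ ≤ ‖x‖ → m < V x - β' * Real.log (‖x‖) := by
    intro x hx habs
    have := hb₀ (‖x‖) (le_trans (le_max_left _ _) habs) x rfl hx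
    exact_mod_cast this
  have hlogcont : Continuous fun x : ℂ => Real.log (1 + ‖x‖) :=
    (continuous_const.add continuous_norm).log fun x => (by positivity : (0:ℝ) < 1 + ‖x‖).ne'
  set S := Δ ∩ Metric.closedBall 0 b₁ with hS
  have hScomp : IsCompact S := (isCompact_closedBall 0 b₁).inter_left hΔc
  have hφcont : ContinuousOn (fun x => β * Real.log (1 + ‖x‖) - V x) S :=
    ((continuous_const.mul hlogcont).continuousOn).sub (hV.mono Set.inter_subset_left)
  obtain ⟨C₁, hC₁⟩ := hScomp.exists_bound_of_continuousOn hφcont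
  refine ⟨max (max C₁ (β * Real.log 2 - m)) 0, le_max_right _ _, ?_⟩
  intro x hx
  rcases le_or_gt (‖x‖) b₁ with hle | hgt
  · have hxS : x ∈ S := ⟨hx, by
      rw [Metric.mem_closedBall, dist_zero_right]; exact hle⟩
    have := hC₁ x hxS
    have h2 := le_of_abs_le (by rwa [Real.norm_eq_abs] at this)
    exact le_trans h2 (le_trans (le_max_left _ _) (le_max_left _ _))
  · have hb2 : (2:ℝ) ≤ ‖x‖ := le_trans (le_max_right _ _) hgt.le
    have hkey := key x hx hgt.le
    have hlog0 : 0 ≤ Real.log (‖x‖) := Real.log_nonneg (by linarith)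
    have hlogle : Real.log (1 + ‖x‖) ≤ Real.log 2 + Real.log (‖x‖) := by
      rw [← Real.log_mul (by norm_num) (by linarith)]
      exact Real.log_le_log (by linarith) (by linarith)
    have : β * Real.log (1 + ‖x‖) - V x ≤ β * Real.log 2 - m := by
      nlinarith [mul_le_mul_of_nonneg_left hlogle hβ.le,
        mul_le_mul_of_nonneg_right (sub_nonneg.mpr hββ') hlog0]
    exact le_trans this (le_trans (le_max_right _ _) (le_max_left _ _))
lemma Ksq_mono : Monotone Ksq := fun i j hij x hx =>
  ⟨le_trans hx.1 (by exact_mod_cast hij), le_trans hx.2 (by exact_mod_cast hij)⟩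
lemma Ksq_closed (k : ℕ) : IsClosed (Ksq k) := by
  have h1 : IsClosed {x : ℂ | |x.re| ≤ (k : ℝ)} :=
    isClosed_le (continuous_abs.comp Complex.continuous_re) continuous_const
  have h2 : IsClosed {x : ℂ | |x.im| ≤ (k : ℝ)} :=
    isClosed_le (continuous_abs.comp Complex.continuous_im) continuous_const
  exact h1.inter h2
lemma Ksq_iUnion : ⋃ k, Ksq k = Set.univ := by
  ext x
  simp only [Set.mem_iUnion, Set.mem_univ, iff_true]
  refine ⟨⌈max |x.re| |x.im|⌉₊, ?_, ?_⟩
  · exact le_trans (le_max_left _ _) (Nat.le_ceil _)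
  · exact le_trans (le_max_right _ _) (Nat.le_ceil _)

theorem truncation_convergence (β : ℝ) (hβ : 0 < β) (Δ : Set ℂ)
    (hΔ : Δ = Set.range (Complex.ofReal) ∨ Δ = Set.univ)
    (V : ℂ → ℝ) (hV : ContinuousOn V Δ) (hgrowth : WeakGrowth β Δ V)
    (μ : ProbabilityMeasure ℂ) (hμ : μ ∈ M1 Δ)
    (k₀ : ℕ) (hpos : ∀ k ≥ k₀, 0 < (μ : Measure ℂ) (Δ ∩ Ksq k))
    (μk : ℕ → ProbabilityMeasure ℂ)
    (hμk : ∀ k ≥ k₀, (μk k : Measure ℂ) =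
      ((μ : Measure ℂ) (Δ ∩ Ksq k))⁻¹ • (μ : Measure ℂ).restrict (Δ ∩ Ksq k)) :
    Filter.Tendsto μk Filter.atTop (nhds μ) ∧
      Filter.Tendsto
        (fun k : ℕ => energy β (fun x => ((V x : ℝ) : EReal)) (μk k : Measure ℂ))
        Filter.atTop
        (nhds (energy β (fun x => ((V x : ℝ) : EReal)) (μ : Measure ℂ))) := by
  classical
  have hΔc : IsClosed Δ := by
    rcases hΔ with h | h
    · rw [h]; exact Complex.isometry_ofReal.isClosedEmbedding.isClosed_range
    · rw [h]; exact isClosed_univ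
  have hΔm : MeasurableSet Δ := hΔc.measurableSet
  set A : ℕ → Set ℂ := fun k => Δ ∩ Ksq k with hA
  have hAmono : Monotone A := fun i j hij =>
    Set.inter_subset_inter_right Δ (Ksq_mono hij)
  have hAm : ∀ k, MeasurableSet (A k) := fun k =>
    hΔm.inter (Ksq_closed k).measurableSet
  have hAunion : ⋃ k, A k = Δ := by
    rw [hA, ← Set.inter_iUnion, Ksq_iUnion, Set.inter_univ]
  have hμΔc : (μ : Measure ℂ) Δᶜ = 0 := hμ
  have hμΔ : (μ : Measure ℂ) Δ = 1 := by
    have h1 := measure_add_measure_compl (μ := (μ : Measure ℂ)) hΔm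
    rw [hμΔc, add_zero, measure_univ] at h1
    exact h1
  set c : ℕ → ℝ≥0∞ := fun k => (μ : Measure ℂ) (A k) with hc
  have hctend : Tendsto c atTop (𝓝 1) := by
    have h1 := tendsto_measure_iUnion_atTop (μ := (μ : Measure ℂ)) hAmono
    rwa [hAunion, hμΔ] at h1
  have hcinv : Tendsto (fun k => (c k)⁻¹) atTop (𝓝 1) := by
    have h1 := hctend.inv
    rwa [inv_one] at h1
  have hcne0 : ∀ k ≥ k₀, c k ≠ 0 := fun k hk => (hpos k hk).ne'
  have hcnetop : ∀ k ≥ k₀, (c k)⁻¹ ≠ ⊤ := fun k hk => ENNReal.inv_ne_top.mpr (hcne0 k hk)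
  have haemem : ∀ᵐ x ∂(μ : Measure ℂ), x ∈ Δ := by
    rw [ae_iff]
    exact hμΔc
  have hμres : (μ : Measure ℂ).restrict Δ = μ :=
    Measure.restrict_eq_self_of_ae_mem haemem
  have hVae : AEMeasurable V (μ : Measure ℂ) := by
    have h1 := hV.aemeasurable (μ := (μ : Measure ℂ)) hΔm
    rwa [hμres] at h1
  set W := hVae.mk V with hWdef
  have hW : Measurable W := hVae.measurable_mk
  have hVW : V =ᵐ[(μ : Measure ℂ)] W := hVae.ae_eq_mk
  obtain ⟨C, hC0, hC⟩ := growth_bound β hβ hΔc hV hgrowth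
  have hμkac : ∀ k ≥ k₀, (μk k : Measure ℂ) ≪ (μ : Measure ℂ) := by
    intro k hk
    rw [hμk k hk]
    exact Measure.smul_absolutelyContinuous.trans
      (Measure.absolutelyContinuous_of_le Measure.restrict_le_self)
  constructor
  · rw [ProbabilityMeasure.tendsto_iff_forall_lintegral_tendsto]
    intro f
    have hg : Measurable fun x => (f x : ℝ≥0∞) :=
      measurable_coe_nnreal_ennreal.comp f.continuous.measurable
    have hmct := lintegral_tendsto_of_monotone_sets (μ : Measure ℂ) hg hAmono hAm
      (by rw [hAunion]; exact hμΔc)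
    have hmul := ENNReal.Tendsto.mul hcinv (Or.inl one_ne_zero) hmct
      (Or.inr ENNReal.one_ne_top)
    rw [one_mul] at hmul
    refine Tendsto.congr' ?_ hmul
    filter_upwards [eventually_ge_atTop k₀] with k hk
    rw [hμk k hk, lintegral_smul_measure, smul_eq_mul]
  · set V' : ℂ → EReal := fun x => ((V x : ℝ) : EReal) with hV'
    set W' : ℂ → EReal := fun z => ((W z : ℝ) : EReal) with hW'
    set R : ℂ × ℂ → ℝ :=
      fun p => β / 2 * (-Real.log (dist p.1 p.2)) + 2⁻¹ * W p.1 + 2⁻¹ * W p.2 with hRdef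
    have hRmeas : Measurable R :=
      ((((Real.measurable_log.comp measurable_dist).neg).const_mul _).add
        ((hW.comp measurable_fst).const_mul _)).add ((hW.comp measurable_snd).const_mul _)
    have hdistset : MeasurableSet {p : ℂ × ℂ | dist p.1 p.2 = 0} :=
      measurable_dist (measurableSet_singleton 0)
    set Kf : ℂ × ℂ → EReal :=
      fun p => if dist p.1 p.2 = 0 then ⊤ else ((R p : ℝ) : EReal) with hKdef
    have hKf : ∀ p : ℂ × ℂ, Kf p = kern β W' p.1 p.2 := fun p => by
      rw [kern_eq β hβ W p.1 p.2]
    have hKmeas : Measurable Kf :=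
      Measurable.ite hdistset measurable_const (measurable_coe_real_ereal.comp hRmeas)
    set G : ℂ × ℂ → ℝ≥0∞ :=
      fun p => if dist p.1 p.2 = 0 then ⊤ else ENNReal.ofReal (R p + C) with hGdef
    have hGeq : ∀ p, G p = (Kf p + ((C : ℝ) : EReal)).posPart' := by
      intro p
      by_cases h : dist p.1 p.2 = 0
      · simp only [hGdef, hKdef, if_pos h, EReal.top_add_coe, posPart'_top]
      · simp only [hGdef, hKdef, if_neg h, ← EReal.coe_add, posPart'_coe]
    have hGmeas : Measurable G :=
      Measurable.ite hdistset measurable_const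
        (ENNReal.measurable_ofReal.comp (hRmeas.add_const C))
    have hform : ∀ ν : Measure ℂ, IsProbabilityMeasure ν → ν Δᶜ = 0 → V =ᵐ[ν] W →
        energy β V' ν = ((∫⁻ p, G p ∂ν.prod ν : ℝ≥0∞) : EReal) - ((C : ℝ) : EReal) := by
      intro ν hprob hνΔ hνVW
      haveI := hprob
      have hνmem : ∀ᵐ x ∂ν, x ∈ Δ := by rw [ae_iff]; exact hνΔ
      have hin2 := ae_prod_of_ae (ν := ν) (hνmem.and hνVW)
      have hcong : (fun p : ℂ × ℂ => kern β V' p.1 p.2) =ᵐ[ν.prod ν]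
          (fun p => kern β W' p.1 p.2) := by
        filter_upwards [hin2] with q hq
        simp only [kern, hV', hW', hq.1.2, hq.2.2]
      have hbd : ∀ᵐ p ∂ν.prod ν, ((-C : ℝ) : EReal) ≤ kern β W' p.1 p.2 := by
        filter_upwards [hin2] with q hq
        have h1 := kern_lower β hβ V hC hq.1.1 hq.2.1
        have h2 : kern β V' q.1 q.2 = kern β W' q.1 q.2 := by
          simp only [kern, hV', hW', hq.1.2, hq.2.2]
        rw [← h2]
        exact h1
      have hKmeas' : Measurable fun p : ℂ × ℂ => kern β W' p.1 p.2 := by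
        have h3 : (fun p : ℂ × ℂ => kern β W' p.1 p.2) = Kf := funext fun p => (hKf p).symm
        rw [h3]; exact hKmeas
      unfold energy
      rw [eIntegral_congr_ae hcong, eIntegral_eq (ν.prod ν) hKmeas' hC0 hbd]
      congr 2
      apply lintegral_congr
      intro p
      rw [hGeq p, hKf p]
    have hEμ := hform (μ : Measure ℂ) inferInstance hμΔc hVW
    have hEμk : ∀ k ≥ k₀, energy β V' (μk k : Measure ℂ) =
        ((∫⁻ p, G p ∂(μk k : Measure ℂ).prod (μk k : Measure ℂ) : ℝ≥0∞) : EReal) -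
          ((C : ℝ) : EReal) :=
      fun k hk => hform _ inferInstance ((hμkac k hk) hμΔc)
        (hVW.filter_mono (hμkac k hk).ae_le)
    set L : ℕ → ℝ≥0∞ :=
      fun k => ∫⁻ p in (A k) ×ˢ (A k), G p ∂((μ : Measure ℂ).prod (μ : Measure ℂ)) with hLdef
    have hQk : ∀ k ≥ k₀, (∫⁻ p, G p ∂(μk k : Measure ℂ).prod (μk k : Measure ℂ)) =
        (c k)⁻¹ * ((c k)⁻¹ * L k) := by
      intro k hk
      have e1 : L k = ∫⁻ x, (∫⁻ y, G (x, y)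
          ∂((μ : Measure ℂ).restrict (A k))) ∂((μ : Measure ℂ).restrict (A k)) := by
        show (∫⁻ p in (A k) ×ˢ (A k), G p ∂((μ : Measure ℂ).prod (μ : Measure ℂ))) = _
        rw [← Measure.prod_restrict, lintegral_prod G hGmeas.aemeasurable]
      rw [hμk k hk, lintegral_prod G hGmeas.aemeasurable, lintegral_smul_measure]
      simp only [lintegral_smul_measure, smul_eq_mul]
      rw [lintegral_const_mul' _ _ (hcnetop k hk), e1]
    have hLinf : Tendsto L atTop
        (𝓝 (∫⁻ p, G p ∂((μ : Measure ℂ).prod (μ : Measure ℂ)))) := by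
      apply lintegral_tendsto_of_monotone_sets _ hGmeas
        (fun i j hij => Set.prod_mono (hAmono hij) (hAmono hij))
        (fun k => (hAm k).prod (hAm k))
      have hU : ⋃ k, (A k) ×ˢ (A k) = Δ ×ˢ Δ := by
        apply Set.Subset.antisymm
        · exact Set.iUnion_subset fun k =>
            Set.prod_mono Set.inter_subset_left Set.inter_subset_left
        · rintro ⟨x, y⟩ ⟨hx, hy⟩
          have hxK : x ∈ ⋃ k, Ksq k := by rw [Ksq_iUnion]; trivial
          have hyK : y ∈ ⋃ k, Ksq k := by rw [Ksq_iUnion]; trivial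
          obtain ⟨sx, ⟨i, rfl⟩, hi⟩ := hxK
          obtain ⟨sy, ⟨j, rfl⟩, hj⟩ := hyK
          refine Set.mem_iUnion.mpr ⟨max i j, ⟨hx, Ksq_mono (le_max_left i j) hi⟩,
            ⟨hy, Ksq_mono (le_max_right i j) hj⟩⟩
      rw [hU]
      apply measure_mono_null
        (t := ((Δᶜ ×ˢ (Set.univ : Set ℂ)) ∪ ((Set.univ : Set ℂ) ×ˢ Δᶜ)))
      · rintro ⟨x, y⟩ h
        simp only [Set.mem_compl_iff, Set.mem_prod, not_and_or] at h
        rcases h with h | h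
        · exact Or.inl ⟨h, Set.mem_univ _⟩
        · exact Or.inr ⟨Set.mem_univ _, h⟩
      · apply measure_union_null <;> rw [Measure.prod_prod] <;> simp [hμΔc]
    have hQtend : Tendsto (fun k => ∫⁻ p, G p ∂(μk k : Measure ℂ).prod (μk k : Measure ℂ))
        atTop (𝓝 (∫⁻ p, G p ∂((μ : Measure ℂ).prod (μ : Measure ℂ)))) := by
      have h2 := ENNReal.Tendsto.mul hcinv (Or.inl one_ne_zero) hLinf
        (Or.inr ENNReal.one_ne_top)
      rw [one_mul] at h2
      have h3 := ENNReal.Tendsto.mul hcinv (Or.inl one_ne_zero) h2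
        (Or.inr ENNReal.one_ne_top)
      rw [one_mul] at h3
      refine Tendsto.congr' ?_ h3
      filter_upwards [eventually_ge_atTop k₀] with k hk
      exact (hQk k hk).symm
    rw [hEμ]
    have hcoe : Tendsto
        (fun k => ((∫⁻ p, G p ∂(μk k : Measure ℂ).prod (μk k : Measure ℂ) : ℝ≥0∞) : EReal))
        atTop (𝓝 ((∫⁻ p, G p ∂((μ : Measure ℂ).prod (μ : Measure ℂ)) : ℝ≥0∞) : EReal)) :=
      (continuous_coe_ennreal_ereal.tendsto _).comp hQtend
    have hsubcont : ContinuousAt (fun z : EReal => z - ((C : ℝ) : EReal))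
        ((∫⁻ p, G p ∂((μ : Measure ℂ).prod (μ : Measure ℂ)) : ℝ≥0∞) : EReal) := by
      have h4 : (fun z : EReal => z - ((C : ℝ) : EReal)) =
          (fun pq : EReal × EReal => pq.1 + pq.2) ∘ (fun z => (z, -((C : ℝ) : EReal))) :=
        funext fun z => sub_eq_add_neg z _
      rw [h4]
      apply ContinuousAt.comp
      · apply EReal.continuousAt_add
        · exact Or.inr (by rw [← EReal.coe_neg]; exact EReal.coe_ne_bot _)
        · exact Or.inr (by rw [← EReal.coe_neg]; exact EReal.coe_ne_top _)
      · exact continuousAt_id.prodMk continuousAt_const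
    have hfinal := (hsubcont.tendsto).comp hcoe
    refine Tendsto.congr' ?_ hfinal
    filter_upwards [eventually_ge_atTop k₀] with k hk
    exact (hEμk k hk).symm
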